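/- arXiv:1205.4158 — 4 statements merged into one kernel-verified Lean document; each statement's English description precedes it below -/
import Mathlib

section
/- Let f be differentiable on I° with f' integrable on [a,b], |f'| strongly convex on [a,b] with modulus c > 0, |f'| ≤ M, and M ≥ c(b-a)²/24 on the midpoint case. Then |f((a+b)/2) - (1/(b-a))∫_a^b f(u) du| ≤ M(b-a)/4 - c(b-a)³/96. -/
open MeasureTheory intervalIntegral Set

def StronglyConvexOnWith (a b c : ℝ) (g : ℝ → ℝ) : Prop :=
  ∀ x ∈ Set.Icc a b, ∀ y ∈ Set.Icc a b, ∀ t ∈ Set.Ioo (0:ℝ) 1,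
    g (t * x + (1 - t) * y) ≤ t * g x + (1 - t) * g y - c * t * (1 - t) * (x - y) ^ 2

set_option maxHeartbeats 400000 in
theorem stmt2 (I : Set ℝ) (hI : Convex ℝ I) (f f' : ℝ → ℝ) (a b c M : ℝ)
    (ha : a ∈ I) (hb : b ∈ I) (hab : a < b) (hc : 0 < c)
    (hdiff : ∀ y ∈ interior I, HasDerivAt f (f' y) y)
    (hint : IntervalIntegrable f' volume a b)
    (hsc : StronglyConvexOnWith a b c (fun u => |f' u|))
    (hM : ∀ u ∈ Set.Icc a b, |f' u| ≤ M)
    (hMm : c * (b - a) ^ 2 / 24 ≤ M) :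
    |f ((a + b) / 2) - (1 / (b - a)) * ∫ u in a..b, f u| ≤
      M * (b - a) / 4 - c * (b - a) ^ 3 / 96 := by
  set m := (a + b) / 2 with hm_def
  have ham : a < m := by simp only [hm_def]; linarith
  have hmb : m < b := by simp only [hm_def]; linarith
  have hba : (0:ℝ) < b - a := by linarith
  have hsub : Icc a b ⊆ I := hI.ordConnected.out ha hb
  have hIoo : Ioo a b ⊆ interior I := by
    rw [← interior_Icc]; exact interior_mono hsub
  have hM0 : 0 ≤ M := le_trans (abs_nonneg _) (hM a ⟨le_refl a, hab.le⟩)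
  -- Lipschitz extension
  have lip : LipschitzOnWith M.toNNReal f (Ioo a b) := by
    apply Convex.lipschitzOnWith_of_nnnorm_hasDerivWithin_le (convex_Ioo a b)
      (fun x hx => (hdiff x (hIoo hx)).hasDerivWithinAt)
    intro x hx
    rw [← NNReal.coe_le_coe, coe_nnnorm, Real.coe_toNNReal _ hM0, Real.norm_eq_abs]
    exact hM x (Ioo_subset_Icc_self hx)
  obtain ⟨g, glip, hfg⟩ := lip.extend_real
  have gcont : Continuous g := glip.continuous
  have gd : ∀ x ∈ Ioo a b, HasDerivAt g (f' x) x := by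
    intro x hx
    refine (hdiff x (hIoo hx)).congr_of_eventuallyEq ?_
    exact Filter.eventuallyEq_of_mem (Ioo_mem_nhds hx.1 hx.2) (fun y hy => (hfg hy).symm)
  have gm : g m = f m := (hfg ⟨ham, hmb⟩).symm
  -- integrals of f and g agree
  have hfgint : (∫ u in a..b, f u) = ∫ u in a..b, g u := by
    apply intervalIntegral.integral_congr_ae
    filter_upwards [compl_mem_ae_iff.mpr (measure_singleton b)] with x hx hxI
    rw [uIoc_of_le hab.le] at hxI
    exact hfg ⟨hxI.1, lt_of_le_of_ne hxI.2 hx⟩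
  -- integrability facts
  have hint1 : IntervalIntegrable f' volume a m :=
    hint.mono_set (uIcc_subset_uIcc_left (by rw [uIcc_of_le hab.le]; exact ⟨ham.le, hmb.le⟩))
  have hint2 : IntervalIntegrable f' volume m b :=
    hint.mono_set (uIcc_subset_uIcc_right (by rw [uIcc_of_le hab.le]; exact ⟨ham.le, hmb.le⟩))
  have hq1 : IntervalIntegrable (fun u => (u - a) * f' u) volume a m :=
    hint1.continuousOn_mul (by fun_prop)
  have hq2 : IntervalIntegrable (fun u => (u - b) * f' u) volume m b :=
    hint2.continuousOn_mul (by fun_prop)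
  -- FTC identities
  have ftc1 : (∫ u in a..m, (u - a) * f' u) = (m - a) * g m - ∫ u in a..m, g u := by
    have key := intervalIntegral.integral_eq_sub_of_hasDerivAt_of_le (a := a) (b := m)
      (f := fun u => (u - a) * g u) (f' := fun u => g u + (u - a) * f' u) ham.le
      (by fun_prop) ?_ (((gcont.intervalIntegrable _ _)).add hq1)
    · rw [intervalIntegral.integral_add (gcont.intervalIntegrable _ _) hq1] at key
      simp only [sub_self, zero_mul, sub_zero] at key
      linarith [key]
    · intro u hu
      have hu' : u ∈ Ioo a b := ⟨hu.1, hu.2.trans hmb⟩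
      have := ((hasDerivAt_id u).sub_const a).mul (gd u hu')
      refine this.congr_deriv ?_; simp only [id_eq]; ring
  have ftc2 : (∫ u in m..b, (u - b) * f' u) = (b - m) * g m - ∫ u in m..b, g u := by
    have key := intervalIntegral.integral_eq_sub_of_hasDerivAt_of_le (a := m) (b := b)
      (f := fun u => (u - b) * g u) (f' := fun u => g u + (u - b) * f' u) hmb.le
      (by fun_prop) ?_ (((gcont.intervalIntegrable _ _)).add hq2)
    · rw [intervalIntegral.integral_add (gcont.intervalIntegrable _ _) hq2] at key
      simp only [sub_self, zero_mul, zero_sub] at key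
      linarith [key]
    · intro u hu
      have hu' : u ∈ Ioo a b := ⟨ham.trans hu.1, hu.2⟩
      have := ((hasDerivAt_id u).sub_const b).mul (gd u hu')
      refine this.congr_deriv ?_; simp only [id_eq]; ring
  -- main identity
  have hsplit : (∫ u in a..b, g u) = (∫ u in a..m, g u) + ∫ u in m..b, g u :=
    (intervalIntegral.integral_add_adjacent_intervals (gcont.intervalIntegrable _ _)
      (gcont.intervalIntegrable _ _)).symm
  have main : f m - (1 / (b - a)) * ∫ u in a..b, f u =
      (1 / (b - a)) * ((∫ u in a..m, (u - a) * f' u) + ∫ u in m..b, (u - b) * f' u) := by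
    rw [hfgint, ftc1, ftc2, hsplit, ← gm]
    field_simp
    ring
  -- pointwise bound on |f'|
  have bound : ∀ u ∈ Icc a b, |f' u| ≤ M - c * ((b - u) * (u - a)) := by
    intro u hu
    rcases eq_or_lt_of_le hu.1 with heq | hau
    · rw [← heq]; have := hM a ⟨le_refl a, hab.le⟩; nlinarith
    rcases eq_or_lt_of_le hu.2 with heq | hub
    · rw [heq]; have := hM b ⟨hab.le, le_refl b⟩; nlinarith
    set t := (b - u) / (b - a) with ht_def
    have ht : t ∈ Ioo (0:ℝ) 1 := by
      constructor
      · exact div_pos (by linarith) hba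
      · rw [div_lt_one hba]; linarith
    have hsum : t * a + (1 - t) * b = u := by rw [ht_def]; field_simp; ring
    have h1 := hsc a ⟨le_refl a, hab.le⟩ b ⟨hab.le, le_refl b⟩ t ht
    rw [hsum] at h1
    have ha' := hM a ⟨le_refl a, hab.le⟩
    have hb' := hM b ⟨hab.le, le_refl b⟩
    have hts : c * t * (1 - t) * (a - b) ^ 2 = c * ((b - u) * (u - a)) := by
      rw [ht_def]; field_simp; ring
    nlinarith [ht.1, ht.2, h1]
  -- bound the two integrals
  have hB1 : |∫ u in a..m, (u - a) * f' u| ≤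
      ∫ u in a..m, (u - a) * (M - c * ((b - u) * (u - a))) := by
    refine (intervalIntegral.abs_integral_le_integral_abs ham.le).trans ?_
    apply intervalIntegral.integral_mono_on ham.le hq1.abs
      (Continuous.intervalIntegrable (by fun_prop) _ _)
    intro u hu
    have hu' : u ∈ Icc a b := ⟨hu.1, hu.2.trans hmb.le⟩
    rw [abs_mul, abs_of_nonneg (by linarith [hu.1] : (0:ℝ) ≤ u - a)]
    exact mul_le_mul_of_nonneg_left (bound u hu') (by linarith [hu.1])
  have hB2 : |∫ u in m..b, (u - b) * f' u| ≤
      ∫ u in m..b, (b - u) * (M - c * ((b - u) * (u - a))) := by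
    refine (intervalIntegral.abs_integral_le_integral_abs hmb.le).trans ?_
    apply intervalIntegral.integral_mono_on hmb.le hq2.abs
      (Continuous.intervalIntegrable (by fun_prop) _ _)
    intro u hu
    have hu' : u ∈ Icc a b := ⟨ham.le.trans hu.1, hu.2⟩
    rw [abs_mul, abs_of_nonpos (by linarith [hu.2] : u - b ≤ 0)]
    have : |u - b| = b - u := by rw [abs_of_nonpos (by linarith [hu.2])]; ring
    rw [show -(u-b) = b - u by ring]
    exact mul_le_mul_of_nonneg_left (bound u hu') (by linarith [hu.2])
  -- compute the polynomial integrals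
  have comp1 : (∫ u in a..m, (u - a) * (M - c * ((b - u) * (u - a)))) =
      M * (m - a)^2 / 2 - c * ((b - a) * (m - a)^3 / 3 - (m - a)^4 / 4) := by
    have hd : ∀ u : ℝ, HasDerivAt
        (fun u => M * (u - a)^2 / 2 - c * ((b - a) * (u - a)^3 / 3 - (u - a)^4 / 4))
        ((u - a) * (M - c * ((b - u) * (u - a)))) u := by
      intro u
      have h1 : HasDerivAt (fun u : ℝ => u - a) 1 u := (hasDerivAt_id u).sub_const a
      have := ((((h1.pow 2).const_mul M).div_const 2).sub
        (((((h1.pow 3).const_mul (b - a)).div_const 3).sub ((h1.pow 4).div_const 4)).const_mul c))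
      refine this.congr_deriv ?_
      push_cast
      ring
    rw [intervalIntegral.integral_eq_sub_of_hasDerivAt (fun u _ => hd u)
      (Continuous.intervalIntegrable (by fun_prop) _ _)]
    simp
  have comp2 : (∫ u in m..b, (b - u) * (M - c * ((b - u) * (u - a)))) =
      M * (b - m)^2 / 2 - c * ((b - a) * (b - m)^3 / 3 - (b - m)^4 / 4) := by
    have hd : ∀ u : ℝ, HasDerivAt
        (fun u => -(M * (b - u)^2 / 2) + c * ((b - a) * (b - u)^3 / 3 - (b - u)^4 / 4))
        ((b - u) * (M - c * ((b - u) * (u - a)))) u := by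
      intro u
      have h1 : HasDerivAt (fun u : ℝ => b - u) (-1) u := (hasDerivAt_id u).const_sub b
      have := ((((h1.pow 2).const_mul M).div_const 2).neg.add
        (((((h1.pow 3).const_mul (b - a)).div_const 3).sub ((h1.pow 4).div_const 4)).const_mul c))
      refine this.congr_deriv ?_
      push_cast
      ring
    rw [intervalIntegral.integral_eq_sub_of_hasDerivAt (fun u _ => hd u)
      (Continuous.intervalIntegrable (by fun_prop) _ _)]
    simp
    ring
  -- put everything together
  rw [main, abs_mul, abs_of_nonneg (by positivity : (0:ℝ) ≤ 1 / (b - a))]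
  have habs : |(∫ u in a..m, (u - a) * f' u) + ∫ u in m..b, (u - b) * f' u| ≤
      (M * (m - a)^2 / 2 - c * ((b - a) * (m - a)^3 / 3 - (m - a)^4 / 4)) +
      (M * (b - m)^2 / 2 - c * ((b - a) * (b - m)^3 / 3 - (b - m)^4 / 4)) :=
    (abs_add_le _ _).trans (by rw [← comp1, ← comp2]; exact add_le_add hB1 hB2)
  have e1 : m - a = (b - a) / 2 := by rw [hm_def]; ring
  have e2 : b - m = (b - a) / 2 := by rw [hm_def]; ring
  rw [e1, e2] at habs
  calc (1 / (b - a)) * |(∫ u in a..m, (u - a) * f' u) + ∫ u in m..b, (u - b) * f' u|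
      ≤ (1 / (b - a)) * ((M * ((b - a) / 2)^2 / 2 - c * ((b - a) * ((b - a) / 2)^3 / 3 - ((b - a) / 2)^4 / 4)) +
        (M * ((b - a) / 2)^2 / 2 - c * ((b - a) * ((b - a) / 2)^3 / 3 - ((b - a) / 2)^4 / 4))) :=
        mul_le_mul_of_nonneg_left habs (by positivity)
    _ ≤ M * (b - a) / 4 - c * (b - a) ^ 3 / 96 := by
        rw [one_div, inv_mul_le_iff₀ hba]
        nlinarith [mul_pos hc (pow_pos hba 4)]
end

section
/- Let f be differentiable on I° with f' integrable on [a,b], q > 1, 1/p + 1/q = 1, |f'|^q strongly convex on [a,b] with modulus c > 0, |f'| ≤ M, and M^q ≥ c(b-a)²/24. Then |f((a+b)/2) - (1/(b-a))∫_a^b f(u) du| ≤ ((b-a)/2)·(1/(p+1))^{1/p}·(M^q - c(b-a)²/24)^{1/q}. -/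
open MeasureTheory intervalIntegral Set

theorem aux_parts {g : ℝ → ℝ} {m b : ℝ} (hmb : m ≤ b)
    (hg : IntervalIntegrable g volume m b) :
    (∫ u in m..b, (∫ t in m..u, g t)) = ∫ t in m..b, (b - t) * g t := by
  have hgt : IntervalIntegrable (fun t => t * g t) volume m b :=
    hg.continuousOn_mul continuousOn_id
  set A : ℝ → ℝ := fun u => ∫ t in m..u, g t with hA
  set B : ℝ → ℝ := fun u => ∫ t in m..u, t * g t with hB
  set H : ℝ → ℝ := fun u => u * A u - B u with hH
  have hmem : ∀ u ∈ Icc m b, u ∈ uIcc m b := by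
    intro u hu; rw [uIcc_of_le hmb]; exact hu
  have hsub : ∀ u ∈ Icc m b, IntervalIntegrable g volume m u := fun u hu =>
    hg.mono_set (uIcc_subset_uIcc left_mem_uIcc (hmem u hu))
  have hsubt : ∀ u ∈ Icc m b, IntervalIntegrable (fun t => t * g t) volume m u := fun u hu =>
    hgt.mono_set (uIcc_subset_uIcc left_mem_uIcc (hmem u hu))
  have hAc : ContinuousOn A (Icc m b) := by
    have := continuousOn_primitive_interval' hg (left_mem_uIcc)
    rwa [uIcc_of_le hmb] at this
  have hBc : ContinuousOn B (Icc m b) := by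
    have := continuousOn_primitive_interval' hgt (left_mem_uIcc)
    rwa [uIcc_of_le hmb] at this
  have hHc : ContinuousOn H (Icc m b) := (continuousOn_id.mul hAc).sub hBc
  -- key identity
  have hkey : ∀ u ∈ Icc m b, ∀ w ∈ Icc m b,
      H w - H u - (w - u) * A u = ∫ t in u..w, (w - t) * g t := by
    intro u hu w hw
    have h1 : A w - A u = ∫ t in u..w, g t :=
      integral_interval_sub_left (hsub w hw) (hsub u hu)
    have h2 : B w - B u = ∫ t in u..w, t * g t :=
      integral_interval_sub_left (hsubt w hw) (hsubt u hu)
    have h3 : IntervalIntegrable g volume u w :=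
      hg.mono_set (uIcc_subset_uIcc (hmem u hu) (hmem w hw))
    have h4 : IntervalIntegrable (fun t => t * g t) volume u w :=
      hgt.mono_set (uIcc_subset_uIcc (hmem u hu) (hmem w hw))
    have : H w - H u - (w - u) * A u = w * (A w - A u) - (B w - B u) := by
      simp only [hH]; ring
    rw [this, h1, h2, ← intervalIntegral.integral_const_mul,
      ← intervalIntegral.integral_sub (h3.const_mul w) h4]
    congr 1; ext t; ring
  have hderiv : ∀ u ∈ Ioo m b, HasDerivWithinAt H (A u) (Ioi u) u := by
    intro u hu
    have humem : u ∈ Icc m b := ⟨hu.1.le, hu.2.le⟩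
    have hmain : HasDerivWithinAt H (A u) (Icc m b) u := by
      rw [hasDerivWithinAt_iff_isLittleO, Asymptotics.isLittleO_iff]
      intro ε hε
      have hψ : ContinuousWithinAt (fun w => ∫ t in u..w, |g t|) (Icc m b) u := by
        have := continuousOn_primitive_interval' hg.abs
          (by rw [uIcc_of_le hmb]; exact humem)
        rw [uIcc_of_le hmb] at this
        exact this u humem
      have hev : ∀ᶠ w in nhdsWithin u (Icc m b), abs (∫ t in u..w, |g t|) < ε := by
        have h0 : (∫ t in u..u, |g t|) = 0 := integral_same
        have habs : Filter.Tendsto (fun w => abs (∫ t in u..w, |g t|))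
            (nhdsWithin u (Icc m b)) (nhds (abs (∫ t in u..u, |g t|))) :=
          (continuous_abs.tendsto _).comp hψ.tendsto
        rw [h0, abs_zero] at habs
        exact habs.eventually_lt_const hε
      filter_upwards [hev, self_mem_nhdsWithin] with w hw hwmem
      have hid := hkey u humem w hwmem
      have h3 : IntervalIntegrable g volume u w :=
        hg.mono_set (uIcc_subset_uIcc (hmem u humem) (hmem w hwmem))
      have hb1 : ‖∫ t in u..w, (w - t) * g t‖ ≤ abs (∫ t in u..w, |w - u| * |g t|) := by
        apply intervalIntegral.norm_integral_le_abs_of_norm_le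
        · filter_upwards [MeasureTheory.ae_restrict_mem measurableSet_uIoc] with t ht
          have h5 : |w - t| ≤ |w - u| := by
            rcases le_total u w with h | h
            · rw [uIoc_of_le h] at ht
              rw [abs_of_nonneg (by linarith [ht.2] : (0:ℝ) ≤ w - t),
                abs_of_nonneg (by linarith : (0:ℝ) ≤ w - u)]
              linarith [ht.1]
            · rw [uIoc_of_ge h] at ht
              rw [abs_of_nonpos (by linarith [ht.1] : w - t ≤ 0),
                abs_of_nonpos (by linarith : w - u ≤ 0)]
              linarith [ht.2]
          calc ‖(w - t) * g t‖ = |w - t| * |g t| := abs_mul _ _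
            _ ≤ |w - u| * |g t| := by
                exact mul_le_mul_of_nonneg_right h5 (abs_nonneg _)
        · exact (h3.abs.const_mul _)
      rw [smul_eq_mul] at *
      calc ‖H w - H u - (w - u) * A u‖ = ‖∫ t in u..w, (w - t) * g t‖ := by rw [hid]
        _ ≤ abs (∫ t in u..w, |w - u| * |g t|) := hb1
        _ = |w - u| * abs (∫ t in u..w, |g t|) := by
            rw [intervalIntegral.integral_const_mul, abs_mul, abs_abs]
        _ ≤ |w - u| * ε := by
            exact mul_le_mul_of_nonneg_left hw.le (abs_nonneg _)
        _ = ε * ‖w - u‖ := by rw [Real.norm_eq_abs]; ring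
    exact hmain.mono_of_mem_nhdsWithin
      (Filter.mem_of_superset (Ioo_mem_nhdsGT_of_mem ⟨le_refl u, hu.2⟩)
        (fun x hx => ⟨hu.1.le.trans hx.1.le, hx.2.le⟩))
  have hAint : IntervalIntegrable A volume m b := by
    apply ContinuousOn.intervalIntegrable
    rwa [uIcc_of_le hmb]
  have := intervalIntegral.integral_eq_sub_of_hasDeriv_right_of_le hmb hHc hderiv hAint
  rw [this]
  have hHm : H m = 0 := by simp [hH, hA, hB]
  have hHb : H b = ∫ t in m..b, (b - t) * g t := by
    have : H b = b * A b - B b := rfl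
    rw [this, hA, hB, ← intervalIntegral.integral_const_mul,
      ← intervalIntegral.integral_sub (hg.const_mul b) hgt]
    congr 1; ext t; ring
  rw [hHm, hHb, sub_zero]

set_option maxHeartbeats 1000000 in
theorem stmt4 (I : Set ℝ) (hI : Convex ℝ I) (f f' : ℝ → ℝ) (a b c M p q : ℝ)
    (ha : a ∈ I) (hb : b ∈ I) (hab : a < b) (hc : 0 < c)
    (hq : 1 < q) (hpq : 1 / p + 1 / q = 1)
    (hdiff : ∀ y ∈ interior I, HasDerivAt f (f' y) y)
    (hint : IntervalIntegrable f' volume a b)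
    (hsc : StronglyConvexOnWith a b c (fun u => |f' u| ^ q))
    (hM : ∀ u ∈ Set.Icc a b, |f' u| ≤ M)
    (hMm : c * (b - a) ^ 2 / 24 ≤ M ^ q) :
    |f ((a + b) / 2) - (1 / (b - a)) * ∫ u in a..b, f u| ≤
      ((b - a) / 2) * (1 / (p + 1)) ^ (1 / p) * (M ^ q - c * (b - a) ^ 2 / 24) ^ (1 / q) := by
  set m : ℝ := (a + b) / 2 with hmdef
  have ham : a < m := by rw [hmdef]; linarith
  have hmb : m < b := by rw [hmdef]; linarith
  have hIcc : Icc a b ⊆ I := hI.ordConnected.out ha hb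
  have hIoo : Ioo a b ⊆ interior I := by
    rw [← interior_Icc]; exact interior_mono hIcc
  set A : ℝ → ℝ := fun u => ∫ t in m..u, f' t with hAdef
  -- FTC pointwise
  have hftc : ∀ u ∈ Ioo a b, f u = f m + A u := by
    intro u hu
    have hsub : uIcc m u ⊆ Ioo a b := by
      intro t ht
      exact ⟨lt_of_lt_of_le (lt_min ham hu.1) ht.1, lt_of_le_of_lt ht.2 (max_lt hmb hu.2)⟩
    have hsub2 : uIcc m u ⊆ uIcc a b := by
      rw [uIcc_of_le hab.le]
      exact fun t ht => ⟨(hsub ht).1.le, (hsub ht).2.le⟩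
    have hF : ∀ t ∈ uIcc m u, HasDerivAt f (f' t) t := fun t ht => hdiff t (hIoo (hsub ht))
    have hi : IntervalIntegrable f' volume m u := hint.mono_set hsub2
    have := intervalIntegral.integral_eq_sub_of_hasDerivAt hF hi
    rw [hAdef]; simp only []; rw [this]; ring
  have hmu : m ∈ uIcc a b := by rw [uIcc_of_le hab.le]; exact ⟨ham.le, hmb.le⟩
  have hAcont : ContinuousOn A (uIcc a b) := continuousOn_primitive_interval' hint hmu
  have hi_am : IntervalIntegrable f' volume a m :=
    hint.mono_set (uIcc_subset_uIcc left_mem_uIcc hmu)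
  have hi_mb : IntervalIntegrable f' volume m b :=
    hint.mono_set (uIcc_subset_uIcc hmu right_mem_uIcc)
  have hA_am : IntervalIntegrable A volume a m :=
    (hAcont.mono (uIcc_subset_uIcc left_mem_uIcc hmu)).intervalIntegrable
  have hA_mb : IntervalIntegrable A volume m b :=
    (hAcont.mono (uIcc_subset_uIcc hmu right_mem_uIcc)).intervalIntegrable
  have hA_ab : IntervalIntegrable A volume a b := hAcont.intervalIntegrable
  -- step: ∫ f = ∫ (f m + A u)
  have hstep : (∫ u in a..b, f u) = ∫ u in a..b, (f m + A u) := by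
    apply intervalIntegral.integral_congr_ae
    have h1 : ∀ᵐ x : ℝ, x ≠ b := by
      refine MeasureTheory.ae_iff.mpr ?_
      simp only [ne_eq, not_not]
      have : {x : ℝ | x = b} = {b} := by ext x; simp
      rw [this]
      exact Real.volume_singleton
    filter_upwards [h1] with x hx hxmem
    rw [uIoc_of_le hab.le] at hxmem
    exact hftc x ⟨hxmem.1, lt_of_le_of_ne hxmem.2 hx⟩
  -- compute ∫ A on the two halves
  have e1 : (∫ u in m..b, A u) = ∫ t in m..b, (b - t) * f' t := aux_parts hmb.le hi_mb
  have e2 : (∫ u in a..m, A u) = - ∫ t in a..m, (t - a) * f' t := by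
    have h3 : (∫ u in a..m, (∫ t in a..u, f' t)) = ∫ t in a..m, (m - t) * f' t :=
      aux_parts ham.le hi_am
    have hAu : ∀ u ∈ uIcc a m, A u = (∫ t in a..u, f' t) - ∫ t in a..m, f' t := by
      intro u hu
      rw [uIcc_of_le ham.le] at hu
      have hiu : IntervalIntegrable f' volume a u := by
        apply hint.mono_set
        rw [uIcc_of_le hab.le, uIcc_of_le hu.1]
        exact Icc_subset_Icc le_rfl (hu.2.trans hmb.le)
      rw [hAdef]
      exact (integral_interval_sub_left hiu hi_am).symm
    have hprim : IntervalIntegrable (fun u => ∫ t in a..u, f' t) volume a m := by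
      apply ContinuousOn.intervalIntegrable
      apply continuousOn_primitive_interval' hi_am left_mem_uIcc
    rw [intervalIntegral.integral_congr hAu,
      intervalIntegral.integral_sub hprim intervalIntegrable_const, h3,
      intervalIntegral.integral_const, smul_eq_mul, ← intervalIntegral.integral_const_mul,
      ← intervalIntegral.integral_sub (hi_am.continuousOn_mul (by fun_prop))
        (hi_am.continuousOn_mul (by fun_prop)),
      ← intervalIntegral.integral_neg]
    apply intervalIntegral.integral_congr
    intro t _
    simp only [smul_eq_mul]
    ring
  -- the full identity
  have total : f m - (1 / (b - a)) * ∫ u in a..b, f u =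
      (1 / (b - a)) * ((∫ t in a..m, (t - a) * f' t) - ∫ t in m..b, (b - t) * f' t) := by
    rw [hstep, intervalIntegral.integral_add intervalIntegrable_const hA_ab,
      intervalIntegral.integral_const,
      ← intervalIntegral.integral_add_adjacent_intervals hA_am hA_mb, e1, e2]
    have hba : b - a ≠ 0 := by linarith
    field_simp
    ring
  -- ===== estimation part =====
  have hba : (0:ℝ) < b - a := by linarith
  have hM0 : 0 ≤ M := (abs_nonneg (f' a)).trans (hM a ⟨le_rfl, hab.le⟩)
  have hq0 : (0:ℝ) < q := lt_trans one_pos hq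
  have hinvq1 : 1 / q < 1 := by rw [div_lt_one hq0]; exact hq
  have hinvq0 : 0 < 1 / q := by positivity
  have hinvp0 : 0 < 1 / p := by linarith
  have hp0 : 0 < p := one_div_pos.mp hinvp0
  have hp1 : 1 < p := by
    rw [← div_lt_one hp0]; linarith
  have hconj : Real.HolderConjugate p q := ⟨by simpa [one_div] using hpq, hp0, hq0⟩
  set L : ℝ := (b - a) / 2 with hLdef
  have hL0 : (0:ℝ) < L := by rw [hLdef]; linarith
  set X : ℝ := M ^ q - c * (b - a) ^ 2 / 24 with hXdef
  have hX0 : 0 ≤ X := by rw [hXdef]; linarith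
  set K : ℝ → ℝ := fun t => if t ≤ m then t - a else b - t with hKdef
  set μ : Measure ℝ := volume.restrict (Ioc a b) with hμdef
  haveI : IsFiniteMeasure μ := by
    constructor
    rw [hμdef, Measure.restrict_apply_univ]
    exact measure_Ioc_lt_top
  have hmeasK : Measurable K := by
    apply Measurable.ite measurableSet_Iic
    · exact measurable_id.sub measurable_const
    · exact measurable_const.sub measurable_id
  have hKIoc : ∀ t ∈ Ioc a b, 0 ≤ K t ∧ K t ≤ b - a := by
    intro t ht
    rw [hKdef]
    by_cases h : t ≤ m
    · simp only [if_pos h]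
      constructor <;> [linarith [ht.1]; linarith [ht.2]]
    · simp only [if_neg h]
      constructor <;> [linarith [ht.2]; linarith [ht.1]]
  have hf'Ioc : IntegrableOn f' (Ioc a b) volume := hint.1
  -- |f'| ≤ M on Ioc
  have hMIoc : ∀ t ∈ Ioc a b, |f' t| ≤ M := fun t ht => hM t ⟨ht.1.le, ht.2⟩
  -- bound : |LHS| ≤ (1/(b-a)) * ∫ K |f'|
  have bound1 : |f m - (1 / (b - a)) * ∫ u in a..b, f u| ≤
      (1 / (b - a)) * ∫ t in Ioc a b, K t * |f' t| := by
    have i1 : |∫ t in a..m, (t - a) * f' t| ≤ ∫ t in Ioc a m, (t - a) * |f' t| := by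
      have hgi : IntervalIntegrable (fun t => (t - a) * |f' t|) volume a m :=
        hi_am.abs.continuousOn_mul (by fun_prop)
      have h := intervalIntegral.norm_integral_le_abs_of_norm_le
        (f := fun t => (t - a) * f' t) (μ := volume) (a := a) (b := m)
        (g := fun t => (t - a) * |f' t|) ?_ hgi
      · have hnn : 0 ≤ ∫ t in Ioc a m, (t - a) * |f' t| :=
          setIntegral_nonneg measurableSet_Ioc fun t ht =>
            mul_nonneg (by linarith [ht.1]) (abs_nonneg _)
        rw [← Real.norm_eq_abs]
        exact h.trans_eq (by rw [intervalIntegral.integral_of_le ham.le, abs_of_nonneg hnn])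
      · filter_upwards [MeasureTheory.ae_restrict_mem measurableSet_uIoc] with t ht
        rw [uIoc_of_le ham.le] at ht
        rw [Real.norm_eq_abs, abs_mul, abs_of_nonneg (by linarith [ht.1] : (0:ℝ) ≤ t - a)]
    have i2 : |∫ t in m..b, (b - t) * f' t| ≤ ∫ t in Ioc m b, (b - t) * |f' t| := by
      have hgi : IntervalIntegrable (fun t => (b - t) * |f' t|) volume m b :=
        hi_mb.abs.continuousOn_mul (by fun_prop)
      have h := intervalIntegral.norm_integral_le_abs_of_norm_le
        (f := fun t => (b - t) * f' t) (μ := volume) (a := m) (b := b)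
        (g := fun t => (b - t) * |f' t|) ?_ hgi
      · have hnn : 0 ≤ ∫ t in Ioc m b, (b - t) * |f' t| :=
          setIntegral_nonneg measurableSet_Ioc fun t ht =>
            mul_nonneg (by linarith [ht.2]) (abs_nonneg _)
        rw [← Real.norm_eq_abs]
        exact h.trans_eq (by rw [intervalIntegral.integral_of_le hmb.le, abs_of_nonneg hnn])
      · filter_upwards [MeasureTheory.ae_restrict_mem measurableSet_uIoc] with t ht
        rw [uIoc_of_le hmb.le] at ht
        rw [Real.norm_eq_abs, abs_mul, abs_of_nonneg (by linarith [ht.2] : (0:ℝ) ≤ b - t)]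
    have hKint : IntegrableOn (fun t => K t * |f' t|) (Ioc a b) volume := by
      apply MeasureTheory.Integrable.mono (hf'Ioc.norm.const_mul (b - a))
      · have hn := hf'Ioc.aestronglyMeasurable.norm
        simp only [Real.norm_eq_abs] at hn
        exact hmeasK.aestronglyMeasurable.mul hn
      · filter_upwards [MeasureTheory.ae_restrict_mem measurableSet_Ioc] with t ht
        rw [Real.norm_eq_abs, Real.norm_eq_abs, abs_mul, abs_mul,
          abs_of_nonneg (hKIoc t ht).1, abs_abs, Real.norm_eq_abs, abs_abs,
          abs_of_nonneg (by linarith : (0:ℝ) ≤ b - a)]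
        exact mul_le_mul_of_nonneg_right (hKIoc t ht).2 (abs_nonneg _)
    have hsum : (∫ t in Ioc a m, (t - a) * |f' t|) + (∫ t in Ioc m b, (b - t) * |f' t|) =
        ∫ t in Ioc a b, K t * |f' t| := by
      have c1 : (∫ t in Ioc a m, (t - a) * |f' t|) = ∫ t in Ioc a m, K t * |f' t| :=
        setIntegral_congr_fun measurableSet_Ioc (fun t ht => by
          rw [hKdef]; simp only [if_pos ht.2])
      have c2 : (∫ t in Ioc m b, (b - t) * |f' t|) = ∫ t in Ioc m b, K t * |f' t| :=
        setIntegral_congr_fun measurableSet_Ioc (fun t ht => by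
          rw [hKdef]; simp only [if_neg (not_le.mpr ht.1)])
      rw [c1, c2, ← MeasureTheory.setIntegral_union (Ioc_disjoint_Ioc_of_le le_rfl) measurableSet_Ioc
        (hKint.mono_set (Ioc_subset_Ioc le_rfl hmb.le))
        (hKint.mono_set (Ioc_subset_Ioc ham.le le_rfl)),
        Ioc_union_Ioc_eq_Ioc ham.le hmb.le]
    rw [total, abs_mul, abs_of_pos (by positivity : (0:ℝ) < 1 / (b - a))]
    apply mul_le_mul_of_nonneg_left _ (by positivity)
    calc |(∫ t in a..m, (t - a) * f' t) - ∫ t in m..b, (b - t) * f' t| ≤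
        |∫ t in a..m, (t - a) * f' t| + |∫ t in m..b, (b - t) * f' t| := by
          rw [sub_eq_add_neg]
          exact (abs_add_le _ _).trans (by rw [abs_neg])
      _ ≤ (∫ t in Ioc a m, (t - a) * |f' t|) + (∫ t in Ioc m b, (b - t) * |f' t|) :=
          add_le_add i1 i2
      _ = ∫ t in Ioc a b, K t * |f' t| := hsum
  -- Hölder
  have hKmem : MeasureTheory.MemLp K (ENNReal.ofReal p) μ := by
    apply MeasureTheory.MemLp.of_bound hmeasK.aestronglyMeasurable (b - a)
    rw [hμdef]
    filter_upwards [MeasureTheory.ae_restrict_mem measurableSet_Ioc] with t ht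
    rw [Real.norm_eq_abs, abs_of_nonneg (hKIoc t ht).1]
    exact (hKIoc t ht).2
  have habsf' : AEStronglyMeasurable (fun t => |f' t|) μ := by
    have := hf'Ioc.aestronglyMeasurable.norm
    simpa [Real.norm_eq_abs, hμdef] using this
  have hfmem : MeasureTheory.MemLp (fun t => |f' t|) (ENNReal.ofReal q) μ := by
    apply MeasureTheory.MemLp.of_bound habsf' M
    rw [hμdef]
    filter_upwards [MeasureTheory.ae_restrict_mem measurableSet_Ioc] with t ht
    rw [Real.norm_eq_abs, abs_abs]
    exact hMIoc t ht
  have hKnn : 0 ≤ᵐ[μ] K := by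
    rw [hμdef]
    filter_upwards [MeasureTheory.ae_restrict_mem measurableSet_Ioc] with t ht
    exact (hKIoc t ht).1
  have hfnn : 0 ≤ᵐ[μ] (fun t => |f' t|) := Filter.Eventually.of_forall fun t => abs_nonneg _
  have holder := MeasureTheory.integral_mul_le_Lp_mul_Lq_of_nonneg hconj hKnn hfnn hKmem hfmem
  -- compute ∫ K^p
  have hJp : (∫ t, K t ^ p ∂μ) = 2 * L ^ (p + 1) / (p + 1) := by
    have hma : m - a = L := by rw [hmdef, hLdef]; ring
    have hbm : b - m = L := by rw [hmdef, hLdef]; ring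
    have hp1ne : p + 1 ≠ 0 := by linarith
    have hKp_int : IntegrableOn (fun t => K t ^ p) (Ioc a b) volume := by
      apply MeasureTheory.Integrable.mono
        (integrable_const ((b - a) ^ p) : Integrable _ (volume.restrict (Ioc a b)))
      · exact (Real.continuous_rpow_const hp0.le).comp_aestronglyMeasurable
          hmeasK.aestronglyMeasurable
      · filter_upwards [MeasureTheory.ae_restrict_mem measurableSet_Ioc] with t ht
        rw [Real.norm_eq_abs, Real.norm_eq_abs,
          abs_of_nonneg (Real.rpow_nonneg (hKIoc t ht).1 _),
          abs_of_nonneg (Real.rpow_nonneg (by linarith : (0:ℝ) ≤ b - a) _)]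
        exact Real.rpow_le_rpow (hKIoc t ht).1 (hKIoc t ht).2 hp0.le
    have c1 : (∫ t in Ioc a m, K t ^ p) = L ^ (p + 1) / (p + 1) := by
      have : (∫ t in Ioc a m, K t ^ p) = ∫ t in Ioc a m, (t - a) ^ p :=
        setIntegral_congr_fun measurableSet_Ioc (fun t ht => by
          rw [hKdef]; simp only [if_pos ht.2])
      rw [this, ← intervalIntegral.integral_of_le ham.le]
      have hcs := intervalIntegral.integral_comp_sub_right (a := a) (b := m)
        (fun s => s ^ p) a
      rw [hcs, sub_self, hma, integral_rpow (Or.inl (by linarith : (-1:ℝ) < p)),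
        Real.zero_rpow hp1ne, sub_zero]
    have c2 : (∫ t in Ioc m b, K t ^ p) = L ^ (p + 1) / (p + 1) := by
      have : (∫ t in Ioc m b, K t ^ p) = ∫ t in Ioc m b, (b - t) ^ p :=
        setIntegral_congr_fun measurableSet_Ioc (fun t ht => by
          rw [hKdef]; simp only [if_neg (not_le.mpr ht.1)])
      rw [this, ← intervalIntegral.integral_of_le hmb.le]
      have hcs := intervalIntegral.integral_comp_sub_left (a := m) (b := b)
        (fun s => s ^ p) b
      rw [hcs, sub_self, hbm, integral_rpow (Or.inl (by linarith : (-1:ℝ) < p)),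
        Real.zero_rpow hp1ne, sub_zero]
    rw [hμdef]
    rw [show Ioc a b = Ioc a m ∪ Ioc m b from (Ioc_union_Ioc_eq_Ioc ham.le hmb.le).symm,
      MeasureTheory.setIntegral_union (Ioc_disjoint_Ioc_of_le le_rfl) measurableSet_Ioc
        (hKp_int.mono_set (Ioc_subset_Ioc le_rfl hmb.le))
        (hKp_int.mono_set (Ioc_subset_Ioc ham.le le_rfl)), c1, c2]
    ring
  -- bound ∫ |f'|^q
  have hJq : (∫ t, |f' t| ^ q ∂μ) ≤ (b - a) * X := by
    have hptw : ∀ t ∈ Ioc a b, |f' t| ^ q ≤ M ^ q - c * ((b - t) * (t - a)) := by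
      intro t ht
      rcases eq_or_lt_of_le ht.2 with h | h
      · have hz : c * ((b - t) * (t - a)) = 0 := by rw [h]; ring
        rw [hz, sub_zero]
        exact Real.rpow_le_rpow (abs_nonneg _) (hM t ⟨ht.1.le, ht.2⟩) hq0.le
      · set s : ℝ := (b - t) / (b - a) with hsdef
        have hs0 : 0 < s := div_pos (by linarith) hba
        have hs1 : s < 1 := by rw [hsdef, div_lt_one hba]; linarith [ht.1]
        have harg : s * a + (1 - s) * b = t := by
          rw [hsdef]; field_simp; ring
        have h2 := hsc a ⟨le_rfl, hab.le⟩ b ⟨hab.le, le_rfl⟩ s ⟨hs0, hs1⟩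
        rw [harg] at h2
        simp only at h2
        have hfa : |f' a| ^ q ≤ M ^ q :=
          Real.rpow_le_rpow (abs_nonneg _) (hM a ⟨le_rfl, hab.le⟩) hq0.le
        have hfb : |f' b| ^ q ≤ M ^ q :=
          Real.rpow_le_rpow (abs_nonneg _) (hM b ⟨hab.le, le_rfl⟩) hq0.le
        have hsid : c * s * (1 - s) * (a - b) ^ 2 = c * ((b - t) * (t - a)) := by
          rw [hsdef]; field_simp; ring
        calc |f' t| ^ q ≤ s * |f' a| ^ q + (1 - s) * |f' b| ^ q
            - c * s * (1 - s) * (a - b) ^ 2 := h2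
          _ ≤ s * M ^ q + (1 - s) * M ^ q - c * s * (1 - s) * (a - b) ^ 2 := by
              have t1 := mul_le_mul_of_nonneg_left hfa hs0.le
              have t2 := mul_le_mul_of_nonneg_left hfb (by linarith : (0:ℝ) ≤ 1 - s)
              linarith
          _ = M ^ q - c * s * (1 - s) * (a - b) ^ 2 := by ring
          _ = M ^ q - c * ((b - t) * (t - a)) := by rw [hsid]
    have hfq_int : IntegrableOn (fun t => |f' t| ^ q) (Ioc a b) volume := by
      apply MeasureTheory.Integrable.mono
        (integrable_const (M ^ q) : Integrable _ (volume.restrict (Ioc a b)))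
      · have hn := hf'Ioc.aestronglyMeasurable.norm
        simp only [Real.norm_eq_abs] at hn
        exact (Real.continuous_rpow_const hq0.le).comp_aestronglyMeasurable hn
      · filter_upwards [MeasureTheory.ae_restrict_mem measurableSet_Ioc] with t ht
        rw [Real.norm_eq_abs, Real.norm_eq_abs,
          abs_of_nonneg (Real.rpow_nonneg (abs_nonneg _) _),
          abs_of_nonneg (Real.rpow_nonneg hM0 _)]
        exact Real.rpow_le_rpow (abs_nonneg _) (hMIoc t ht) hq0.le
    have hβcont : Continuous (fun t : ℝ => M ^ q - c * ((b - t) * (t - a))) := by fun_prop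
    have hpoly6 : (∫ t in a..b, (b - t) * (t - a)) = (b - a) ^ 3 / 6 := by
      have hd : ∀ t : ℝ, HasDerivAt (fun t : ℝ => -(t ^ 3) / 3 + (a + b) * t ^ 2 / 2 - a * b * t)
          ((b - t) * (t - a)) t := by
        intro t
        have h1 := ((hasDerivAt_pow 3 t).div_const 3).fun_neg
        have h2 := ((hasDerivAt_pow 2 t).const_mul (a + b)).div_const 2
        have h3 := (hasDerivAt_id t).const_mul (a * b)
        have := (h1.fun_add h2).fun_sub h3
        have e : (fun t : ℝ => -(t ^ 3) / 3 + (a + b) * t ^ 2 / 2 - a * b * t) =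
            (fun i => -(i ^ 3 / 3) + (a + b) * i ^ 2 / 2 - a * b * id i) := by
          funext x; simp only [id_eq]; ring
        rw [e]; exact this.congr_deriv (by push_cast; ring)
      rw [intervalIntegral.integral_eq_sub_of_hasDerivAt (fun t _ => hd t)
        (Continuous.intervalIntegrable (by fun_prop) _ _)]
      ring
    calc (∫ t, |f' t| ^ q ∂μ) = ∫ t in Ioc a b, |f' t| ^ q := by rw [hμdef]
      _ ≤ ∫ t in Ioc a b, (M ^ q - c * ((b - t) * (t - a))) :=
          setIntegral_mono_on hfq_int (hβcont.integrableOn_Ioc) measurableSet_Ioc hptw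
      _ = ∫ t in a..b, (M ^ q - c * ((b - t) * (t - a))) :=
          (intervalIntegral.integral_of_le hab.le).symm
      _ = (b - a) * M ^ q - c * ((b - a) ^ 3 / 6) := by
          rw [intervalIntegral.integral_sub intervalIntegrable_const
            (Continuous.intervalIntegrable (by fun_prop) _ _),
            intervalIntegral.integral_const, smul_eq_mul,
            intervalIntegral.integral_const_mul, hpoly6]
      _ ≤ (b - a) * X := by
          rw [hXdef]
          nlinarith [mul_pos hc (pow_pos hba 3)]
  have hJq0 : 0 ≤ ∫ t, |f' t| ^ q ∂μ := by
    rw [hμdef]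
    apply setIntegral_nonneg measurableSet_Ioc
    intro t _
    exact Real.rpow_nonneg (abs_nonneg _) q
  -- chain
  have chain : (1 / (b - a)) * ∫ t in Ioc a b, K t * |f' t| ≤
      (1 / (b - a)) * ((2 * L ^ (p + 1) / (p + 1)) ^ (1 / p) * ((b - a) * X) ^ (1 / q)) := by
    apply mul_le_mul_of_nonneg_left _ (by positivity)
    calc (∫ t in Ioc a b, K t * |f' t|) = ∫ t, K t * |f' t| ∂μ := by rw [hμdef]
      _ ≤ (∫ t, K t ^ p ∂μ) ^ (1 / p) * (∫ t, |f' t| ^ q ∂μ) ^ (1 / q) := holder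
      _ ≤ (2 * L ^ (p + 1) / (p + 1)) ^ (1 / p) * ((b - a) * X) ^ (1 / q) := by
          rw [hJp]
          apply mul_le_mul_of_nonneg_left _ (Real.rpow_nonneg (by positivity) _)
          exact Real.rpow_le_rpow hJq0 hJq (by positivity)
  -- final algebra
  have halg : (1 / (b - a)) * ((2 * L ^ (p + 1) / (p + 1)) ^ (1 / p) * ((b - a) * X) ^ (1 / q)) =
      L * (1 / (p + 1)) ^ (1 / p) * X ^ (1 / q) := by
    have h2L : b - a = 2 * L := by rw [hLdef]; ring
    have hP0 : (0:ℝ) < (p + 1) ^ (1 / p) := Real.rpow_pos_of_pos (by linarith) _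
    have e1 : (2 * L ^ (p + 1) / (p + 1)) ^ (1 / p)
        = 2 ^ (1 / p) * L ^ ((p + 1) * (1 / p)) / (p + 1) ^ (1 / p) := by
      rw [Real.div_rpow (by positivity) (by linarith : (0:ℝ) ≤ p + 1),
        Real.mul_rpow (by norm_num) (Real.rpow_nonneg hL0.le _),
        ← Real.rpow_mul hL0.le]
    have e2 : ((b - a) * X) ^ (1 / q) = 2 ^ (1 / q) * L ^ (1 / q) * X ^ (1 / q) := by
      rw [h2L, Real.mul_rpow (by positivity) hX0, Real.mul_rpow (by norm_num) hL0.le]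
    have h22 : (2:ℝ) ^ (1 / p) * 2 ^ (1 / q) = 2 := by
      rw [← Real.rpow_add (by norm_num : (0:ℝ) < 2), hpq, Real.rpow_one]
    have hexp : (p + 1) * (1 / p) + 1 / q = 2 := by
      have hpne : p ≠ 0 := ne_of_gt hp0
      have h1p : (p + 1) * (1 / p) = 1 + 1 / p := by field_simp
      rw [h1p]; linarith
    have hLL : L ^ ((p + 1) * (1 / p)) * L ^ (1 / q) = L * L := by
      rw [← Real.rpow_add hL0, hexp,
        show (2:ℝ) = ((2:ℕ):ℝ) by norm_num, Real.rpow_natCast]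
      ring
    have hone : (1 / (p + 1)) ^ (1 / p) = 1 / (p + 1) ^ (1 / p) := by
      rw [Real.div_rpow (by norm_num) (by linarith : (0:ℝ) ≤ p + 1), Real.one_rpow]
    rw [e1, e2, hone, h2L]
    have hLne : L ≠ 0 := ne_of_gt hL0
    have hPne : (p + 1) ^ (1 / p) ≠ 0 := ne_of_gt hP0
    set u : ℝ := (2:ℝ) ^ (1/p); set v : ℝ := (2:ℝ) ^ (1/q)
    set s1 : ℝ := L ^ ((p+1) * (1/p)); set t1 : ℝ := L ^ (1/q)
    set Y : ℝ := X ^ (1/q); set P : ℝ := (p+1) ^ (1/p)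
    have hstep2 : u * s1 / P * (v * t1 * Y) = (u * v) * (s1 * t1) * Y / P := by ring
    rw [hstep2, h22, hLL]
    field_simp
  calc |f ((a + b) / 2) - (1 / (b - a)) * ∫ u in a..b, f u| ≤
      (1 / (b - a)) * ∫ t in Ioc a b, K t * |f' t| := bound1
    _ ≤ (1 / (b - a)) * ((2 * L ^ (p + 1) / (p + 1)) ^ (1 / p) * ((b - a) * X) ^ (1 / q)) := chain
    _ = ((b - a) / 2) * (1 / (p + 1)) ^ (1 / p) * (M ^ q - c * (b - a) ^ 2 / 24) ^ (1 / q) := by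
        rw [halg, hLdef, hXdef]
end

section
/- Let f be differentiable on I° with f' integrable on [a,b], q ≥ 1, |f'|^q strongly convex on [a,b] with modulus c > 0, |f'| ≤ M, and M^q ≥ c(b-a)²/24. Then |f((a+b)/2) - (1/(b-a))∫_a^b f(u) du| ≤ ((b-a)/4)·(M^q - c(b-a)²/24)^{1/q}. -/
open MeasureTheory intervalIntegral Set

lemma tangent_rpow {x B r : ℝ} (hx : 0 ≤ x) (hB : 0 < B) (hr1 : 0 < r) (hr2 : r ≤ 1) :
    x ^ r ≤ B ^ r + r * B ^ (r - 1) * (x - B) := by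
  have hy : -1 ≤ x / B - 1 := by
    have : 0 ≤ x / B := div_nonneg hx hB.le
    linarith
  have h := rpow_one_add_le_one_add_mul_self hy hr1.le hr2
  have h2 : (x / B) ^ r ≤ 1 + r * (x / B - 1) := by
    have : (1 : ℝ) + (x / B - 1) = x / B := by ring
    rwa [this] at h
  have hBr : 0 < B ^ r := Real.rpow_pos_of_pos hB r
  have hdiv : (x / B) ^ r = x ^ r / B ^ r := Real.div_rpow hx hB.le r
  have hmul := mul_le_mul_of_nonneg_left h2 hBr.le
  rw [hdiv] at hmul
  have hBr1 : B ^ (r - 1) = B ^ r / B := by rw [Real.rpow_sub hB, Real.rpow_one]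
  calc x ^ r = B ^ r * (x ^ r / B ^ r) := by field_simp
    _ ≤ B ^ r * (1 + r * (x / B - 1)) := hmul
    _ = B ^ r + r * (B ^ r / B) * (x - B) := by field_simp
    _ = B ^ r + r * B ^ (r - 1) * (x - B) := by rw [hBr1]

lemma integral_cubic (s t p0 p1 p2 p3 : ℝ) :
    (∫ u in s..t, (p0 + p1 * u + p2 * u ^ 2 + p3 * u ^ 3)) =
      (p0 * t + p1 * t ^ 2 / 2 + p2 * t ^ 3 / 3 + p3 * t ^ 4 / 4) -
      (p0 * s + p1 * s ^ 2 / 2 + p2 * s ^ 3 / 3 + p3 * s ^ 4 / 4) := by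
  have h : ∀ x : ℝ, HasDerivAt (fun u => p0 * u + p1 * u ^ 2 / 2 + p2 * u ^ 3 / 3 + p3 * u ^ 4 / 4)
      (p0 + p1 * x + p2 * x ^ 2 + p3 * x ^ 3) x := by
    intro x
    have h1 : HasDerivAt (fun u : ℝ => u) 1 x := hasDerivAt_id x
    have h2 := hasDerivAt_pow 2 x
    have h3 := hasDerivAt_pow 3 x
    have h4 := hasDerivAt_pow 4 x
    exact ((((h1.const_mul p0).add ((h2.const_mul p1).div_const 2)).add
      ((h3.const_mul p2).div_const 3)).add ((h4.const_mul p3).div_const 4)).congr_deriv (by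
    push_cast
    ring)
  rw [intervalIntegral.integral_eq_sub_of_hasDerivAt (fun x _ => h x)
    (by apply Continuous.intervalIntegrable; continuity)]

set_option maxHeartbeats 1000000 in
theorem stmt6 (I : Set ℝ) (hI : Convex ℝ I) (f f' : ℝ → ℝ) (a b c M q : ℝ)
    (ha : a ∈ I) (hb : b ∈ I) (hab : a < b) (hc : 0 < c) (hq : 1 ≤ q)
    (hdiff : ∀ y ∈ interior I, HasDerivAt f (f' y) y)
    (hint : IntervalIntegrable f' volume a b)
    (hsc : StronglyConvexOnWith a b c (fun u => |f' u| ^ q))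
    (hM : ∀ u ∈ Set.Icc a b, |f' u| ≤ M)
    (hMm : c * (b - a) ^ 2 / 24 ≤ M ^ q) :
    |f ((a + b) / 2) - (1 / (b - a)) * ∫ u in a..b, f u| ≤
      ((b - a) / 4) * (M ^ q - c * (b - a) ^ 2 / 24) ^ (1 / q) := by
  have hL : 0 < b - a := sub_pos.mpr hab
  have hq0 : 0 < q := lt_of_lt_of_le one_pos hq
  set r : ℝ := 1 / q with hr
  have hr0 : 0 < r := by positivity
  have hr1 : r ≤ 1 := by rw [hr]; exact (div_le_one hq0).mpr hq
  set m : ℝ := (a + b) / 2 with hm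
  have ham : a < m := by rw [hm]; linarith
  have hmb : m < b := by rw [hm]; linarith
  -- derivative on the open interval
  have hIcc : Icc a b ⊆ I := hI.ordConnected.out ha hb
  have hIoo : Ioo a b ⊆ interior I := by
    rw [← interior_Icc]; exact interior_mono hIcc
  have hd : ∀ u ∈ Ioo a b, HasDerivAt f (f' u) u := fun u hu => hdiff u (hIoo hu)
  -- primitive
  set F : ℝ → ℝ := fun u => ∫ t in m..u, f' t with hF
  have hm_mem : m ∈ uIcc a b := by
    rw [uIcc_of_le hab.le]; exact ⟨ham.le, hmb.le⟩
  have hFcont : ContinuousOn F (Icc a b) := by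
    have h := continuousOn_primitive_interval' hint hm_mem
    rwa [uIcc_of_le hab.le] at h
  have hFm : F m = 0 := integral_same
  have hoo : Set.OrdConnected (Ioo a b) := ordConnected_Ioo
  have hFf : ∀ u ∈ Ioo a b, F u = f u - f m := by
    intro u hu
    have hsub : uIcc m u ⊆ Ioo a b := hoo.uIcc_subset ⟨ham, hmb⟩ hu
    have hsub2 : uIcc m u ⊆ uIcc a b := by
      rw [uIcc_of_le hab.le]; exact hsub.trans Ioo_subset_Icc_self
    exact intervalIntegral.integral_eq_sub_of_hasDerivAt (fun x hx => hd x (hsub hx))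
      (hint.mono_set hsub2)
  have hFd : ∀ u ∈ Ioo a b, HasDerivAt F (f' u) u := by
    intro u hu
    have heq : (fun x => f x - f m) =ᶠ[nhds u] F := by
      filter_upwards [isOpen_Ioo.mem_nhds hu] with x hx
      exact (hFf x hx).symm
    exact (((hd u hu).sub_const (f m)).congr_of_eventuallyEq heq.symm)
  have hFint : IntervalIntegrable F volume a b := hFcont.intervalIntegrable_of_Icc hab.le
  have hFint1 : IntervalIntegrable F volume a m := hFint.mono_set (by
    rw [uIcc_of_le hab.le, uIcc_of_le ham.le]; exact Icc_subset_Icc le_rfl hmb.le)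
  have hFint2 : IntervalIntegrable F volume m b := hFint.mono_set (by
    rw [uIcc_of_le hab.le, uIcc_of_le hmb.le]; exact Icc_subset_Icc ham.le le_rfl)
  -- rewrite the integral of f
  have hfs : ∫ u in a..b, f u = (∫ u in a..b, F u) + f m * (b - a) := by
    have hae : ∫ u in a..b, f u = ∫ u in a..b, (F u + f m) := by
      apply intervalIntegral.integral_congr_ae
      have hnull : (volume : Measure ℝ) ({b} : Set ℝ) = 0 := measure_singleton b
      filter_upwards [compl_mem_ae_iff.mpr hnull] with x hx hxI
      rw [uIoc_of_le hab.le] at hxI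
      have hxo : x ∈ Ioo a b := ⟨hxI.1, lt_of_le_of_ne hxI.2 (by simpa using hx)⟩
      rw [hFf x hxo]; ring
    rw [hae, intervalIntegral.integral_add hFint intervalIntegrable_const,
      intervalIntegral.integral_const, smul_eq_mul]
    ring
  -- integration by parts on both halves
  have hsub1 : uIcc a m ⊆ uIcc a b := by
    rw [uIcc_of_le hab.le, uIcc_of_le ham.le]; exact Icc_subset_Icc le_rfl hmb.le
  have hsub2 : uIcc m b ⊆ uIcc a b := by
    rw [uIcc_of_le hab.le, uIcc_of_le hmb.le]; exact Icc_subset_Icc ham.le le_rfl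
  have hg1int : IntervalIntegrable (fun u => (u - a) * f' u) volume a m :=
    (hint.mono_set hsub1).continuousOn_mul (by fun_prop)
  have hg2int : IntervalIntegrable (fun u => (u - b) * f' u) volume m b :=
    (hint.mono_set hsub2).continuousOn_mul (by fun_prop)
  have hP1 : (∫ u in a..m, (F u + (u - a) * f' u)) =
      (m - a) * F m - (a - a) * F a := by
    apply integral_eq_sub_of_hasDerivAt_of_le (f := fun u => (u - a) * F u) ham.le
    · exact ((continuousOn_id.sub continuousOn_const).mul
        (hFcont.mono (Icc_subset_Icc le_rfl hmb.le))).congr (fun x _ => by simp only [Pi.mul_apply, Pi.sub_apply, id_eq]; ring)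
    · intro x hx
      have hx' : x ∈ Ioo a b := ⟨hx.1, hx.2.trans hmb⟩
      exact (((hasDerivAt_id x).sub_const a).mul (hFd x hx')).congr_deriv (by simp only [id_eq]; ring)
    · exact hFint1.add hg1int
  have hP2 : (∫ u in m..b, (F u + (u - b) * f' u)) =
      (b - b) * F b - (m - b) * F m := by
    apply integral_eq_sub_of_hasDerivAt_of_le (f := fun u => (u - b) * F u) hmb.le
    · exact ((continuousOn_id.sub continuousOn_const).mul
        (hFcont.mono (Icc_subset_Icc ham.le le_rfl))).congr (fun x _ => by simp only [Pi.mul_apply, Pi.sub_apply, id_eq]; ring)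
    · intro x hx
      have hx' : x ∈ Ioo a b := ⟨ham.trans hx.1, hx.2⟩
      exact (((hasDerivAt_id x).sub_const b).mul (hFd x hx')).congr_deriv (by simp only [id_eq]; ring)
    · exact hFint2.add hg2int
  have hs1 : (∫ u in a..m, F u) = - ∫ u in a..m, (u - a) * f' u := by
    have := intervalIntegral.integral_add hFint1 hg1int
    rw [this] at hP1
    rw [hFm] at hP1
    linarith [hP1]
  have hs2 : (∫ u in m..b, F u) = - ∫ u in m..b, (u - b) * f' u := by
    have := intervalIntegral.integral_add hFint2 hg2int
    rw [this] at hP2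
    rw [hFm] at hP2
    linarith [hP2]
  have hFsplit : (∫ u in a..b, F u) =
      (∫ u in a..m, F u) + ∫ u in m..b, F u :=
    (intervalIntegral.integral_add_adjacent_intervals hFint1 hFint2).symm
  -- pointwise bounds
  have hM0 : 0 ≤ M := le_trans (abs_nonneg _) (hM a ⟨le_rfl, hab.le⟩)
  have hgA : ∀ u ∈ Icc a b, |f' u| ^ q ≤ M ^ q := fun u hu =>
    Real.rpow_le_rpow (abs_nonneg _) (hM u hu) hq0.le
  have hg0 : ∀ u : ℝ, 0 ≤ |f' u| ^ q := fun u => Real.rpow_nonneg (abs_nonneg _) q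
  have hphi : ∀ u ∈ Icc a b, |f' u| ^ q ≤ M ^ q - c * (b - u) * (u - a) := by
    intro u hu
    by_cases h1 : u = a
    · subst h1; nlinarith [hgA u hu]
    by_cases h2 : u = b
    · subst h2; nlinarith [hgA u hu]
    have ha1 : a < u := lt_of_le_of_ne hu.1 (Ne.symm h1)
    have hb1 : u < b := lt_of_le_of_ne hu.2 h2
    set t : ℝ := (b - u) / (b - a) with ht
    have ht0 : 0 < t := div_pos (by linarith) hL
    have ht1 : t < 1 := (div_lt_one hL).mpr (by linarith)
    have hne : b - a ≠ 0 := ne_of_gt hL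
    have hu' : t * a + (1 - t) * b = u := by
      rw [ht]; field_simp; ring
    have hkey := hsc a ⟨le_rfl, hab.le⟩ b ⟨hab.le, le_rfl⟩ t ⟨ht0, ht1⟩
    simp only [hu'] at hkey
    have hga := hgA a ⟨le_rfl, hab.le⟩
    have hgb := hgA b ⟨hab.le, le_rfl⟩
    have h1t : (1 : ℝ) - t = (u - a) / (b - a) := by
      rw [ht]; field_simp; ring
    have hexp : c * t * (1 - t) * (a - b) ^ 2 = c * (b - u) * (u - a) := by
      rw [h1t, ht]
      field_simp
      ring
    rw [hexp] at hkey
    have e1 : t * (|f' a| ^ q) ≤ t * M ^ q := mul_le_mul_of_nonneg_left hga ht0.le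
    have e2 : (1 - t) * (|f' b| ^ q) ≤ (1 - t) * M ^ q :=
      mul_le_mul_of_nonneg_left hgb (by linarith)
    linarith [hkey, e1, e2]
  have hB : 0 < M ^ q - c * (b - a) ^ 2 / 24 := by
    have hmid := hsc a ⟨le_rfl, hab.le⟩ b ⟨hab.le, le_rfl⟩ (1/2) ⟨by norm_num, by norm_num⟩
    have h0 := hg0 ((1:ℝ)/2 * a + (1 - 1/2) * b)
    have hga := hgA a ⟨le_rfl, hab.le⟩
    have hgb := hgA b ⟨hab.le, le_rfl⟩
    nlinarith [mul_pos hc (pow_pos hL 2)]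
  set B : ℝ := M ^ q - c * (b - a) ^ 2 / 24 with hBdef
  set C2 : ℝ := r * B ^ (r - 1) with hC2
  set C1 : ℝ := B ^ r - C2 * B with hC1
  have hC2nn : 0 ≤ C2 := mul_nonneg hr0.le (Real.rpow_nonneg hB.le _)
  have hpt : ∀ u ∈ Icc a b, |f' u| ≤ C1 + C2 * (M ^ q - c * (b - u) * (u - a)) := by
    intro u hu
    have hx0 : 0 ≤ M ^ q - c * (b - u) * (u - a) := le_trans (hg0 u) (hphi u hu)
    have h1 : |f' u| = (|f' u| ^ q) ^ r := by
      rw [← Real.rpow_mul (abs_nonneg _), hr, mul_one_div, div_self hq0.ne', Real.rpow_one]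
    rw [h1]
    calc (|f' u| ^ q) ^ r ≤ (M ^ q - c * (b - u) * (u - a)) ^ r :=
        Real.rpow_le_rpow (hg0 u) (hphi u hu) hr0.le
      _ ≤ B ^ r + r * B ^ (r - 1) * ((M ^ q - c * (b - u) * (u - a)) - B) :=
        tangent_rpow hx0 hB hr0 hr1
      _ = C1 + C2 * (M ^ q - c * (b - u) * (u - a)) := by rw [hC1, hC2]; ring
  -- integrability of weighted absolute values
  have habs : IntervalIntegrable (fun u => |f' u|) volume a b := hint.abs
  have hJ1int : IntervalIntegrable (fun u => (u - a) * |f' u|) volume a m :=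
    (habs.mono_set hsub1).continuousOn_mul (by fun_prop)
  have hJ2int : IntervalIntegrable (fun u => (b - u) * |f' u|) volume m b :=
    (habs.mono_set hsub2).continuousOn_mul (by fun_prop)
  -- bound oscillation integrals by weighted absolute integrals
  have hJ1 : |∫ u in a..m, (u - a) * f' u| ≤ ∫ u in a..m, (u - a) * |f' u| := by
    calc |∫ u in a..m, (u - a) * f' u| ≤ ∫ u in a..m, |(u - a) * f' u| :=
        intervalIntegral.abs_integral_le_integral_abs ham.le
      _ = ∫ u in a..m, (u - a) * |f' u| := by
        apply intervalIntegral.integral_congr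
        intro x hx
        rw [uIcc_of_le ham.le] at hx
        show |(x - a) * f' x| = (x - a) * |f' x|
        rw [abs_mul, abs_of_nonneg (by linarith [hx.1] : (0:ℝ) ≤ x - a)]
  have hJ2 : |∫ u in m..b, (u - b) * f' u| ≤ ∫ u in m..b, (b - u) * |f' u| := by
    calc |∫ u in m..b, (u - b) * f' u| ≤ ∫ u in m..b, |(u - b) * f' u| :=
        intervalIntegral.abs_integral_le_integral_abs hmb.le
      _ = ∫ u in m..b, (b - u) * |f' u| := by
        apply intervalIntegral.integral_congr
        intro x hx
        rw [uIcc_of_le hmb.le] at hx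
        show |(x - b) * f' x| = (b - x) * |f' x|
        rw [abs_mul, abs_sub_comm, abs_of_nonneg (by linarith [hx.2] : (0:ℝ) ≤ b - x)]
  -- compare with polynomial integrals
  have hI1le : (∫ u in a..m, (u - a) * |f' u|) ≤
      ∫ u in a..m, (u - a) * (C1 + C2 * (M ^ q - c * (b - u) * (u - a))) := by
    refine intervalIntegral.integral_mono_on ham.le hJ1int
      (Continuous.intervalIntegrable (by fun_prop) a m) ?_
    intro x hx
    exact mul_le_mul_of_nonneg_left (hpt x ⟨hx.1, hx.2.trans hmb.le⟩) (by linarith [hx.1])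
  have hI2le : (∫ u in m..b, (b - u) * |f' u|) ≤
      ∫ u in m..b, (b - u) * (C1 + C2 * (M ^ q - c * (b - u) * (u - a))) := by
    refine intervalIntegral.integral_mono_on hmb.le hJ2int
      (Continuous.intervalIntegrable (by fun_prop) m b) ?_
    intro x hx
    exact mul_le_mul_of_nonneg_left (hpt x ⟨ham.le.trans hx.1, hx.2⟩) (by linarith [hx.2])
  -- evaluate the polynomial integrals
  have hval : (∫ u in a..m, (u - a) * (C1 + C2 * (M ^ q - c * (b - u) * (u - a))))
      + (∫ u in m..b, (b - u) * (C1 + C2 * (M ^ q - c * (b - u) * (u - a))))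
      = (C1 + C2 * M ^ q) * (b - a) ^ 2 / 4 - C2 * c * (5 * (b - a) ^ 4 / 96) := by
    have e1 : (∫ u in a..m, (u - a) * (C1 + C2 * (M ^ q - c * (b - u) * (u - a))))
        = ∫ u in a..m, ((-(a * (C1 + C2 * M ^ q)) - C2 * c * a ^ 2 * b)
          + ((C1 + C2 * M ^ q) + C2 * c * (2 * a * b + a ^ 2)) * u
          + (-(C2 * c * (b + 2 * a))) * u ^ 2 + (C2 * c) * u ^ 3) := by
      apply intervalIntegral.integral_congr
      intro x _
      ring
    have e2 : (∫ u in m..b, (b - u) * (C1 + C2 * (M ^ q - c * (b - u) * (u - a))))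
        = ∫ u in m..b, ((b * (C1 + C2 * M ^ q) + C2 * c * a * b ^ 2)
          + (-(C1 + C2 * M ^ q) - C2 * c * (2 * a * b + b ^ 2)) * u
          + (C2 * c * (a + 2 * b)) * u ^ 2 + (-(C2 * c)) * u ^ 3) := by
      apply intervalIntegral.integral_congr
      intro x _
      ring
    rw [e1, e2, integral_cubic, integral_cubic, hm]
    ring
  -- final arithmetic
  have hfin : (C1 + C2 * M ^ q) * (b - a) ^ 2 / 4 - C2 * c * (5 * (b - a) ^ 4 / 96)
      ≤ (b - a) ^ 2 / 4 * B ^ r := by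
    have hre : (C1 + C2 * M ^ q) * (b - a) ^ 2 / 4 - C2 * c * (5 * (b - a) ^ 4 / 96)
        = (b - a) ^ 2 / 4 * B ^ r - C2 * c * (b - a) ^ 4 / 24 := by
      rw [hC1, hBdef]; ring
    have hnn : 0 ≤ C2 * c * (b - a) ^ 4 / 24 := by positivity
    linarith [hre.le, hre.ge]
  -- assemble
  have hLHS : f m - 1 / (b - a) * ∫ u in a..b, f u = -((∫ u in a..b, F u) / (b - a)) := by
    rw [hfs]
    field_simp
    ring
  rw [hLHS, abs_neg, abs_div, abs_of_pos hL]
  rw [div_le_iff₀ hL]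
  calc |∫ u in a..b, F u|
      = |(-∫ u in a..m, (u - a) * f' u) + (-∫ u in m..b, (u - b) * f' u)| := by
        rw [hFsplit, hs1, hs2]
    _ ≤ |∫ u in a..m, (u - a) * f' u| + |∫ u in m..b, (u - b) * f' u| :=
        (abs_add_le _ _).trans (le_of_eq (by rw [abs_neg, abs_neg]))
    _ ≤ (∫ u in a..m, (u - a) * |f' u|) + ∫ u in m..b, (b - u) * |f' u| :=
        add_le_add hJ1 hJ2
    _ ≤ (∫ u in a..m, (u - a) * (C1 + C2 * (M ^ q - c * (b - u) * (u - a))))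
        + ∫ u in m..b, (b - u) * (C1 + C2 * (M ^ q - c * (b - u) * (u - a))) :=
        add_le_add hI1le hI2le
    _ = (C1 + C2 * M ^ q) * (b - a) ^ 2 / 4 - C2 * c * (5 * (b - a) ^ 4 / 96) := hval
    _ ≤ (b - a) ^ 2 / 4 * B ^ r := hfin
    _ = (b - a) / 4 * B ^ r * (b - a) := by ring
end

section
/- Let f : [a,b] → [0,∞) be convex and g : [a,b] → [0,∞) be strongly convex with modulus c > 0, with fg integrable on [a,b], a < b. Then (1/(b-a))∫_a^b f(x)g(x) dx + (c(b-a)²/6)·(f(a)+f(b))/2 ≤ (1/3)[f(a)g(a) + f(b)g(b)] + (1/6)[f(a)g(b) + f(b)g(a)]. -/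
open MeasureTheory intervalIntegral Set

lemma cubic_int (c0 c1 c2 c3 : ℝ) :
    ∫ t in (0:ℝ)..1, (c0 + c1*t + c2*t^2 + c3*t^3) = c0 + c1/2 + c2/3 + c3/4 := by
  have h : ∀ t ∈ Set.uIcc (0:ℝ) 1, HasDerivAt
      (fun t : ℝ => c0*t + c1*t^2/2 + c2*t^3/3 + c3*t^4/4)
      (c0 + c1*t + c2*t^2 + c3*t^3) t := by
    intro t _
    have h1 : HasDerivAt (fun t : ℝ => c0*t + c1*t^2/2 + c2*t^3/3 + c3*t^4/4)
        (c0*1 + c1*((2:ℕ)*t^1)/2 + c2*((3:ℕ)*t^2)/3 + c3*((4:ℕ)*t^3)/4) t := by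
      exact ((((hasDerivAt_id t).const_mul c0).add
        (((hasDerivAt_pow 2 t).const_mul c1).div_const 2)).add
        (((hasDerivAt_pow 3 t).const_mul c2).div_const 3)).add
        (((hasDerivAt_pow 4 t).const_mul c3).div_const 4)
    convert h1 using 1; push_cast; ring
  rw [intervalIntegral.integral_eq_sub_of_hasDerivAt h
    ((Continuous.intervalIntegrable (by continuity) _ _))]
  norm_num

theorem stmt10 (f g : ℝ → ℝ) (a b c : ℝ) (hab : a < b) (hc : 0 < c)
    (hf0 : ∀ u ∈ Set.Icc a b, 0 ≤ f u) (hg0 : ∀ u ∈ Set.Icc a b, 0 ≤ g u)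
    (hf : ConvexOn ℝ (Set.Icc a b) f) (hg : StronglyConvexOnWith a b c g)
    (hint : IntervalIntegrable (fun x => f x * g x) volume a b) :
    (1 / (b - a)) * ∫ x in a..b, f x * g x + (c * (b - a) ^ 2 / 6) * ((f a + f b) / 2) ≤
      (1 / 3) * (f a * g a + f b * g b) + (1 / 6) * (f a * g b + f b * g a) := by
  have hba : (0:ℝ) < b - a := by linarith
  set A := f a with hA
  set B := f b with hB
  set P := g a with hP
  set Q := g b with hQ
  set q : ℝ → ℝ := fun t => (t*B + (1-t)*A) * (t*Q + (1-t)*P - c*t*(1-t)*(b-a)^2) with hq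
  have hqc : Continuous q := by unfold q; continuity
  -- pointwise bound
  have hpt : ∀ x ∈ Icc a b, f x * g x ≤ q ((x - a)/(b - a)) := by
    intro x hx
    set t := (x - a)/(b - a) with ht
    have ht0 : 0 ≤ t := div_nonneg (by linarith [hx.1]) hba.le
    have ht1 : t ≤ 1 := by
      rw [ht, div_le_one hba]; linarith [hx.2]
    have hxt : t * b + (1 - t) * a = x := by
      have h' : t * (b - a) = x - a := by rw [ht]; exact div_mul_cancel₀ _ hba.ne'
      linear_combination h'
    have hfx : f x ≤ t * B + (1 - t) * A := by
      have := hf.2 (right_mem_Icc.2 hab.le) (left_mem_Icc.2 hab.le) ht0 (by linarith)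
        (by ring : t + (1 - t) = 1)
      simpa [smul_eq_mul, hxt] using this
    have hgx : g x ≤ t * Q + (1 - t) * P - c*t*(1-t)*(b-a)^2 := by
      rcases eq_or_lt_of_le ht0 with h0 | h0
      · have : x = a := by
          have : t = 0 := h0.symm
          rw [ht] at this
          field_simp at this; linarith
        rw [← h0]; simp [this, hP]
      rcases eq_or_lt_of_le ht1 with h1 | h1
      · have : x = b := by
          rw [ht] at h1
          field_simp at h1; linarith
        rw [h1]; simp [this, hQ]
      · have := hg b (right_mem_Icc.2 hab.le) a (left_mem_Icc.2 hab.le) t ⟨h0, h1⟩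
        rw [hxt] at this
        calc g x ≤ t * Q + (1-t) * P - c * t * (1-t) * (b-a)^2 := this
          _ = t * Q + (1 - t) * P - c*t*(1-t)*(b-a)^2 := by ring
    have hFnn : 0 ≤ t * B + (1 - t) * A := by
      have hA0 := hf0 a (left_mem_Icc.2 hab.le)
      have hB0 := hf0 b (right_mem_Icc.2 hab.le)
      have h1t : 0 ≤ 1 - t := by linarith
      nlinarith
    have hgnn : 0 ≤ g x := hg0 x hx
    calc f x * g x ≤ (t * B + (1 - t) * A) * g x :=
          mul_le_mul_of_nonneg_right hfx hgnn
      _ ≤ (t * B + (1 - t) * A) * (t * Q + (1 - t) * P - c*t*(1-t)*(b-a)^2) :=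
          mul_le_mul_of_nonneg_left hgx hFnn
      _ = q t := rfl
  -- integrability of the bound
  have hqint : IntervalIntegrable (fun x => q ((x - a)/(b - a))) volume a b :=
    Continuous.intervalIntegrable
      (hqc.comp ((continuous_id.sub continuous_const).div_const _)) _ _
  have hmono : ∫ x in a..b, f x * g x ≤ ∫ x in a..b, q ((x - a)/(b - a)) :=
    intervalIntegral.integral_mono_on hab.le hint hqint hpt
  -- compute the integral of the bound
  have hval : ∫ x in a..b, q ((x - a)/(b - a))
      = (b - a) * ((A*P + B*Q)/3 + (A*Q + B*P)/6 - c*(b-a)^2*(A+B)/12) := by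
    have h1 : ∫ x in a..b, q ((x - a)/(b - a)) = ∫ x in (0:ℝ)..(b-a), q (x/(b-a)) := by
      simpa using intervalIntegral.integral_comp_sub_right (a := a) (b := b) (fun x => q (x/(b-a))) a
    have h2 : ∫ x in (0:ℝ)..(b-a), q (x/(b-a)) = (b-a) • ∫ t in (0:ℝ)..1, q t := by
      have := intervalIntegral.integral_comp_div (a := 0) (b := b-a) q hba.ne'
      simpa [hba.ne'] using this
    rw [h1, h2, smul_eq_mul]
    have h3 : ∀ t : ℝ, q t = A*P + (A*(Q-P-c*(b-a)^2) + (B-A)*P)*t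
        + (A*c*(b-a)^2 + (B-A)*(Q-P-c*(b-a)^2))*t^2 + ((B-A)*c*(b-a)^2)*t^3 := by
      intro t; unfold q; ring
    rw [show q = _ from funext h3, cubic_int]
    ring
  have hpos : (0:ℝ) < 1/(b-a) := by positivity
  rw [hval] at hmono
  have h5 : (1/(b-a)) * ∫ x in a..b, f x * g x
      ≤ (A*P + B*Q)/3 + (A*Q + B*P)/6 - c*(b-a)^2*(A+B)/12 := by
    calc (1/(b-a)) * ∫ x in a..b, f x * g x
        ≤ (1/(b-a)) * ((b - a) * ((A*P + B*Q)/3 + (A*Q + B*P)/6 - c*(b-a)^2*(A+B)/12)) :=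
          mul_le_mul_of_nonneg_left hmono hpos.le
      _ = (A*P + B*Q)/3 + (A*Q + B*P)/6 - c*(b-a)^2*(A+B)/12 := by
          field_simp
  have hsplit : ∫ x in a..b, (f x * g x + c * (b - a) ^ 2 / 6 * ((A + B) / 2))
      = (∫ x in a..b, f x * g x) + (b - a) * (c * (b - a) ^ 2 / 6 * ((A + B) / 2)) := by
    rw [intervalIntegral.integral_add hint (intervalIntegrable_const),
      intervalIntegral.integral_const, smul_eq_mul]
  rw [hsplit, mul_add]
  have h6 : 1 / (b - a) * ((b - a) * (c * (b - a) ^ 2 / 6 * ((A + B) / 2)))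
      = c * (b - a) ^ 2 * (A + B) / 12 := by
    rw [show 1 / (b - a) * ((b - a) * (c * (b - a) ^ 2 / 6 * ((A + B) / 2)))
        = ((b - a) / (b - a)) * (c * (b - a) ^ 2 * (A + B) / 12) from by ring,
      div_self hba.ne', one_mul]
  rw [h6]
  linarith [h5]
end
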